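/- Any changing CDM-preserving double edge swap involving edges (u,v) and (x,y) of a colored multigraph G satisfies {c(u), c(v)} = {c(x), c(y)}. Equivalently: if a double edge swap applied to edges (u,v), (x,y) produces a multigraph H ≠ G with the same Colored Degree Matrix as G, then the multiset of endpoint colors of (u,v) equals that of (x,y). -/

import Mathlib

variable {V L : Type*} [DecidableEq V] [DecidableEq L]

/-- The ℓ-colored degree of `v` in a colored multigraph with coloring `c` and
edge multiset `E` (self-loops count twice toward the color of `v`). -/
def cdeg (c : V → L) (E : Multiset (Sym2 V)) (ℓ : L) (v : V) : ℕ :=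
  (E.map (Sym2.lift ⟨fun a b =>
      (if a = v ∧ c b = ℓ then 1 else 0) + (if b = v ∧ c a = ℓ then 1 else 0),
      fun _ _ => add_comm _ _⟩)).sum

/-- The degree of `v` (self-loops count twice). -/
def deg (E : Multiset (Sym2 V)) (v : V) : ℕ :=
  (E.map (Sym2.lift ⟨fun a b =>
      (if a = v then 1 else 0) + (if b = v then 1 else 0),
      fun _ _ => add_comm _ _⟩)).sum

lemma cdeg_add (c : V → L) (A B : Multiset (Sym2 V)) (ℓ : L) (w : V) :
    cdeg c (A + B) ℓ w = cdeg c A ℓ w + cdeg c B ℓ w := by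
  simp [cdeg]

lemma cdeg_pair (c : V → L) (a b d e : V) (ℓ : L) (w : V) :
    cdeg c {s(a,b), s(d,e)} ℓ w =
      ((if a = w ∧ c b = ℓ then 1 else 0) + (if b = w ∧ c a = ℓ then 1 else 0)) +
      ((if d = w ∧ c e = ℓ then 1 else 0) + (if e = w ∧ c d = ℓ then 1 else 0)) := by
  simp [cdeg]

/-- The key combinatorial lemma: if the swap of `(u,v),(x,y)` to `(u,x),(v,y)` is
genuinely changing (`u ≠ y`, `v ≠ x`) and preserves all colored degrees of the
two-edge multisets, then the color multisets of the two old edges agree. -/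
lemma key_cdes (c : V → L) (u v x y : V) (huy : u ≠ y) (hvx : v ≠ x)
    (h : ∀ ℓ w, cdeg c {s(u,x), s(v,y)} ℓ w = cdeg c {s(u,v), s(x,y)} ℓ w) :
    s(c u, c v) = s(c x, c y) := by
  rw [Sym2.eq_iff]
  by_cases huv : u = v
  · subst huv
    have hux : u ≠ x := fun h => hvx h
    have h1 := h (c x) u
    rw [cdeg_pair, cdeg_pair] at h1
    simp [hux, huy, Ne.symm hux, Ne.symm huy] at h1
    split_ifs at h1 <;> first | omega | tauto | simp_all
  · by_cases hxy : x = y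
    · subst hxy
      have h1 := h (c x) x
      rw [cdeg_pair, cdeg_pair] at h1
      simp [Ne.symm huy, Ne.symm hvx, huv] at h1
      split_ifs at h1 <;> first | omega | tauto | simp_all
    · by_cases hux : u = x
      · subst hux
        have h1 := h (c u) u
        rw [cdeg_pair, cdeg_pair] at h1
        simp [Ne.symm hvx, huy, Ne.symm huy, hxy] at h1
        split_ifs at h1 <;> first | omega | tauto | simp_all
      · by_cases hvy : v = y
        · subst hvy
          have h1 := h (c v) v
          rw [cdeg_pair, cdeg_pair] at h1
          simp [Ne.symm huv, hvx, Ne.symm hvx, Ne.symm huy] at h1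
          split_ifs at h1 <;> first | omega | tauto | simp_all
        · have h1 := h (c x) u
          have h2 := h (c y) v
          rw [cdeg_pair, cdeg_pair] at h1 h2
          simp [huv, hux, huy, hvx, hvy, Ne.symm huv, Ne.symm hux, Ne.symm huy,
            Ne.symm hvx, Ne.symm hvy] at h1 h2
          right
          exact ⟨h2, h1⟩

/-- Any changing CDM-preserving double edge swap involves two edges with the same
multiset of endpoint colors: if applying one of the two double edge swaps to edges
`(u,v)`, `(x,y)` of `E` yields `H ≠ E` with the same Colored Degree Matrix as `E`,
then `{c u, c v} = {c x, c y}` as unordered pairs. -/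
theorem changing_cdes_same_colors
    (c : V → L) (E : Multiset (Sym2 V)) (u v x y : V)
    (hmem : ({s(u, v), s(x, y)} : Multiset (Sym2 V)) ≤ E)
    (H : Multiset (Sym2 V))
    (hH : H = E - {s(u, v), s(x, y)} + {s(u, x), s(v, y)} ∨
          H = E - {s(u, v), s(x, y)} + {s(u, y), s(v, x)})
    (hchanging : H ≠ E)
    (hcdm : ∀ (ℓ : L) (w : V), cdeg c H ℓ w = cdeg c E ℓ w) :
    s(c u, c v) = s(c x, c y) := by
  have hE : E - {s(u, v), s(x, y)} + {s(u, v), s(x, y)} = E :=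
    tsub_add_cancel_of_le hmem
  have hkey : ∀ (N : Multiset (Sym2 V)), H = E - {s(u, v), s(x, y)} + N →
      (∀ ℓ w, cdeg c N ℓ w = cdeg c ({s(u, v), s(x, y)} : Multiset (Sym2 V)) ℓ w) ∧
      N ≠ ({s(u, v), s(x, y)} : Multiset (Sym2 V)) := by
    intro N hN
    constructor
    · intro ℓ w
      have h1 := hcdm ℓ w
      rw [hN, cdeg_add] at h1
      conv_rhs at h1 => rw [← hE, cdeg_add]
      omega
    · intro hNeq
      exact hchanging (by rw [hN, hNeq, hE])
  rcases hH with hH | hH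
  · obtain ⟨h1, h2⟩ := hkey _ hH
    have huy : u ≠ y := by
      rintro rfl
      refine h2 ?_
      rw [Sym2.eq_swap (a := u) (b := x), Sym2.eq_swap (a := v) (b := u)]
      exact Multiset.pair_comm _ _
    have hvx : v ≠ x := by
      rintro rfl
      exact h2 (by rw [Sym2.eq_swap (a := v) (b := y)])
    exact key_cdes c u v x y huy hvx h1
  · obtain ⟨h1, h2⟩ := hkey _ hH
    have hux : u ≠ x := by
      rintro rfl
      refine h2 ?_
      rw [Sym2.eq_swap (a := v) (b := u)]
      exact Multiset.pair_comm _ _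
    have hvy : v ≠ y := by
      rintro rfl
      refine h2 ?_
      rw [Sym2.eq_swap (a := v) (b := x)]
    have hmain := key_cdes c u v y x hux hvy (by
      intro ℓ w
      rw [Sym2.eq_swap (a := y) (b := x)]
      exact h1 ℓ w)
    rw [hmain]
    exact Sym2.eq_swap
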